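/- Fix N ≥ 1 and 1/2 ≤ s < 1. Define m : ℝ → ℝ by m(k) = 1 for |k| ≤ N and m(k) = |k|^{s−1}N^{1−s} for |k| > N. If |k2|, |k3| ≤ N/2 and |k4| ≥ N, and k1 = −(k2 + k3 + k4), then |1 − m(k2 + k3 + k4)/(m(k2)m(k3)m(k4))| ≤ C(|k2| + |k3|)/|k4| for a constant C depending only on s. -/

import Mathlib

open Real

lemma core_ratio_bound (p A B a : ℝ) (hp0 : 0 ≤ p) (hp1 : p ≤ 1) (ha : 0 ≤ a)
    (hA : 0 < A) (hB : 0 < B) (haA : a ≤ A) (h1 : B ≤ A + a) (h2 : A ≤ B + a) :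
    |1 - (B / A) ^ p| ≤ 2 * a / B := by
  have htpos : 0 < B / A := div_pos hB hA
  rcases le_or_gt B A with hBA | hAB
  · have ht1 : B / A ≤ 1 := (div_le_one hA).2 hBA
    have h3 : B / A ≤ (B / A) ^ p := by
      calc B / A = (B / A) ^ (1 : ℝ) := (Real.rpow_one _).symm
        _ ≤ (B / A) ^ p := Real.rpow_le_rpow_of_exponent_ge htpos ht1 hp1
    have h4 : (B / A) ^ p ≤ 1 := Real.rpow_le_one htpos.le ht1 hp0
    rw [abs_of_nonneg (by linarith)]
    have h5 : 1 - B / A ≤ 2 * a / B := by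
      rw [sub_le_iff_le_add, div_add_div _ _ hB.ne' hA.ne', le_div_iff₀ (by positivity)]
      nlinarith
    linarith
  · have ht1 : 1 ≤ B / A := (one_le_div hA).2 hAB.le
    have h3 : (B / A) ^ p ≤ B / A := by
      calc (B / A) ^ p ≤ (B / A) ^ (1 : ℝ) :=
            Real.rpow_le_rpow_of_exponent_le ht1 hp1
        _ = B / A := Real.rpow_one _
    have h4 : 1 ≤ (B / A) ^ p := Real.one_le_rpow ht1 hp0
    rw [abs_of_nonpos (by linarith)]
    have h5 : B / A - 1 ≤ 2 * a / B := by
      have e : B / A - 1 = (B - A) / A := by field_simp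
      rw [e, div_le_div_iff₀ hA hB]
      nlinarith
    linarith

/-- Mean value theorem bound for the I-method multiplier in the low-low-high case:
if `|k2|, |k3| ≤ N/2`, `|k4| ≥ N` and `k1 = −(k2+k3+k4)`, then
`|1 − m(k2+k3+k4)/(m(k2)m(k3)m(k4))| ≤ C(|k2|+|k3|)/|k4|`, `C = C(s)`. -/
theorem stmt_3 (s : ℝ) (hs : 1 / 2 ≤ s) (hs1 : s < 1) :
    ∃ C > 0, ∀ N k1 k2 k3 k4 : ℝ, 1 ≤ N →
      |k2| ≤ N / 2 → |k3| ≤ N / 2 → N ≤ |k4| → k1 = -(k2 + k3 + k4) →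
      (fun m : ℝ → ℝ =>
        |1 - m (k2 + k3 + k4) / (m k2 * m k3 * m k4)| ≤ C * (|k2| + |k3|) / |k4|)
        (fun k => if |k| ≤ N then 1 else |k| ^ (s - 1) * N ^ (1 - s)) := by
  refine ⟨2, by norm_num, ?_⟩
  intro N k1 k2 k3 k4 hN hk2 hk3 hk4 hk1
  simp only
  have hN0 : (0 : ℝ) < N := by linarith
  have hm2 : |k2| ≤ N := le_trans hk2 (by linarith)
  have hm3 : |k3| ≤ N := le_trans hk3 (by linarith)
  rw [if_pos hm2, if_pos hm3]
  set k := k2 + k3 + k4 with hk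
  set A := max |k| N with hA
  set B := |k4| with hB
  have hApos : 0 < A := lt_of_lt_of_le hN0 (le_max_right _ _)
  have hBpos : 0 < B := lt_of_lt_of_le hN0 hk4
  have hNone : (1 : ℝ) = N ^ (s - 1) * N ^ (1 - s) := by
    rw [← Real.rpow_add hN0]
    norm_num
  have hmk : (if |k| ≤ N then (1 : ℝ) else |k| ^ (s - 1) * N ^ (1 - s))
      = A ^ (s - 1) * N ^ (1 - s) := by
    split_ifs with h
    · rw [hA, max_eq_right h]
      exact hNone
    · rw [hA, max_eq_left (le_of_lt (lt_of_not_ge h))]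
  have hmk4 : (if |k4| ≤ N then (1 : ℝ) else |k4| ^ (s - 1) * N ^ (1 - s))
      = B ^ (s - 1) * N ^ (1 - s) := by
    split_ifs with h
    · have : B = N := le_antisymm h hk4
      rw [this]
      exact hNone
    · rfl
  rw [hmk, hmk4]
  have hrat : A ^ (s - 1) * N ^ (1 - s) / (1 * 1 * (B ^ (s - 1) * N ^ (1 - s)))
      = (B / A) ^ (1 - s) := by
    rw [Real.div_rpow hBpos.le hApos.le,
      show s - 1 = -(1 - s) by ring, Real.rpow_neg hApos.le, Real.rpow_neg hBpos.le]
    have e1 : A ^ (1 - s) ≠ 0 := (Real.rpow_pos_of_pos hApos _).ne'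
    have e2 : B ^ (1 - s) ≠ 0 := (Real.rpow_pos_of_pos hBpos _).ne'
    have e3 : N ^ (1 - s) ≠ 0 := (Real.rpow_pos_of_pos hN0 _).ne'
    field_simp
  rw [hrat]
  have key : |(|k| - |k4|)| ≤ |k2| + |k3| := by
    calc |(|k| - |k4|)| ≤ |k - k4| := abs_abs_sub_abs_le_abs_sub _ _
      _ = |k2 + k3| := by rw [hk]; ring_nf
      _ ≤ |k2| + |k3| := abs_add_le _ _
  have key' := abs_le.mp key
  have ha : 0 ≤ |k2| + |k3| := by positivity
  have haA : |k2| + |k3| ≤ A := le_trans (by linarith) (le_max_right _ _)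
  have h1 : B ≤ A + (|k2| + |k3|) := by
    have : |k| ≤ A := le_max_left _ _
    rw [hB]; linarith [key'.2]
  have h2 : A ≤ B + (|k2| + |k3|) := by
    apply max_le
    · linarith [key'.1]
    · linarith
  exact core_ratio_bound (1 - s) A B (|k2| + |k3|) (by linarith) (by linarith) ha
    hApos hBpos haA h1 h2
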